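/- If every agent's centrality C_i satisfies Axiom 1 (increasing), then the complete graph K_n on V is the unique APSN: K_n is an APSN, and no other network is. Dually, if every agent's centrality satisfies Axiom 1′ (decreasing), then the empty graph on V is the unique APSN. -/
import Mathlib


open SimpleGraph

/-- Degree of vertex `i` in network `g`. -/
noncomputable def deg {V : Type*} (g : SimpleGraph V) (i : V) : ℕ :=
  Nat.card (g.neighborSet i)

/-- The network `g` with the (missing) edge `ij` added. -/
def addE {V : Type*} (g : SimpleGraph V) (i j : V) : SimpleGraph V :=
  g ⊔ SimpleGraph.fromEdgeSet {s(i, j)}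

/-- The network `g` with the edge `ij` removed. -/
def delE {V : Type*} (g : SimpleGraph V) (i j : V) : SimpleGraph V :=
  g.deleteEdges {s(i, j)}

/-- Utility of agent `i` in the game with centralities `C` and edge cost `c`. -/
noncomputable def util {V : Type*} (C : V → SimpleGraph V → ℝ) (c : ℝ) (i : V)
    (g : SimpleGraph V) : ℝ :=
  C i g - c * (deg g i)

/-- Adding the missing edge `ij` is an improving move. -/
def ImprovingAdd {V : Type*} (C : V → SimpleGraph V → ℝ) (c : ℝ) (g : SimpleGraph V)
    (i j : V) : Prop :=
  util C c i (addE g i j) ≥ util C c i g ∧ util C c j (addE g i j) ≥ util C c j g ∧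
    (util C c i (addE g i j) > util C c i g ∨ util C c j (addE g i j) > util C c j g)

/-- Deleting the edge `ij` is an improving move. -/
def ImprovingDel {V : Type*} (C : V → SimpleGraph V → ℝ) (c : ℝ) (g : SimpleGraph V)
    (i j : V) : Prop :=
  util C c i (delE g i j) > util C c i g ∨ util C c j (delE g i j) > util C c j g

/-- `g` is pairwise stable at edge cost `c`. -/
def PairwiseStable {V : Type*} (C : V → SimpleGraph V → ℝ) (c : ℝ) (g : SimpleGraph V) : Prop :=
  (∀ i j : V, i ≠ j → ¬ g.Adj i j → ¬ ImprovingAdd C c g i j) ∧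
  (∀ i j : V, g.Adj i j → ¬ ImprovingDel C c g i j)

/-- `g` is asymptotically pairwise stable. -/
def APSN {V : Type*} (C : V → SimpleGraph V → ℝ) (g : SimpleGraph V) : Prop :=
  ∃ ε₀ : ℝ, 0 < ε₀ ∧ ∀ c : ℝ, 0 < c → c < ε₀ → PairwiseStable C c g

/-- Axiom 1: the centrality of agent `i` is increasing. -/
def Axiom1 {V : Type*} (C : V → SimpleGraph V → ℝ) (i : V) : Prop :=
  ∀ (g : SimpleGraph V) (j : V), j ≠ i → ¬ g.Adj i j → C i (addE g i j) > C i g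

/-- Axiom 1′: the centrality of agent `i` is decreasing. -/
def Axiom1' {V : Type*} (C : V → SimpleGraph V → ℝ) (i : V) : Prop :=
  ∀ (g : SimpleGraph V) (j : V), j ≠ i → ¬ g.Adj i j → C i (addE g i j) < C i g

/-- Axiom 2: the centrality of agent `i` is componentwise. -/
def Axiom2 {V : Type*} (C : V → SimpleGraph V → ℝ) (i : V) : Prop :=
  ∀ (g : SimpleGraph V) (j : V), j ≠ i → ¬ g.Adj i j →
    ((g.Reachable i j → C i (addE g i j) > C i g) ∧
     (¬ g.Reachable i j → C i (addE g i j) ≤ C i g))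

/-- Axiom 2′: the centrality of agent `i` is peripheral. -/
def Axiom2' {V : Type*} (C : V → SimpleGraph V → ℝ) (i : V) : Prop :=
  ∀ (g : SimpleGraph V) (j : V), j ≠ i → ¬ g.Adj i j →
    ((g.Reachable i j → C i (addE g i j) ≤ C i g) ∧
     (¬ g.Reachable i j → C i (addE g i j) > C i g))

/-- The centrality of agent `i` is degree homophilic with (strictly increasing) `f`. -/
def DegreeHomophilic {V : Type*} (C : V → SimpleGraph V → ℝ) (i : V) (f : ℕ → ℤ) : Prop :=
  ∀ (g : SimpleGraph V) (j : V), j ≠ i → ¬ g.Adj i j →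
    (C i (addE g i j) > C i g ↔ (deg g j : ℤ) ≤ f (deg g i))

section Aux

variable {V : Type*}

lemma adj_addE (g : SimpleGraph V) (i j a b : V) :
    (addE g i j).Adj a b ↔ g.Adj a b ∨ (s(a, b) = s(i, j) ∧ a ≠ b) := by
  simp [addE]

lemma adj_delE (g : SimpleGraph V) (i j a b : V) :
    (delE g i j).Adj a b ↔ g.Adj a b ∧ s(a, b) ≠ s(i, j) := by
  simp [delE]

lemma addE_comm (g : SimpleGraph V) (i j : V) : addE g i j = addE g j i := by
  unfold addE; rw [Sym2.eq_swap]

lemma delE_comm (g : SimpleGraph V) (i j : V) : delE g i j = delE g j i := by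
  unfold delE; rw [Sym2.eq_swap]

lemma addE_delE {g : SimpleGraph V} {i j : V} (h : g.Adj i j) :
    addE (delE g i j) i j = g := by
  ext a b
  simp only [adj_addE, adj_delE]
  constructor
  · rintro (⟨h1, _⟩ | ⟨h1, h2⟩)
    · exact h1
    · rw [Sym2.eq_iff] at h1
      rcases h1 with ⟨rfl, rfl⟩ | ⟨rfl, rfl⟩
      · exact h
      · exact h.symm
  · intro hab
    by_cases he : s(a, b) = s(i, j)
    · exact Or.inr ⟨he, hab.ne⟩
    · exact Or.inl ⟨hab, he⟩

lemma not_adj_delE (g : SimpleGraph V) (i j : V) : ¬ (delE g i j).Adj i j := by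
  simp [adj_delE]

lemma neighborSet_addE {g : SimpleGraph V} {i j : V} (hij : i ≠ j) :
    (addE g i j).neighborSet i = insert j (g.neighborSet i) := by
  ext b
  simp only [SimpleGraph.mem_neighborSet, adj_addE, Set.mem_insert_iff, Sym2.eq_iff]
  aesop

lemma neighborSet_delE {g : SimpleGraph V} {i j : V} (hij : i ≠ j) :
    (delE g i j).neighborSet i = g.neighborSet i \ {j} := by
  ext b
  simp only [SimpleGraph.mem_neighborSet, adj_delE, Set.mem_diff, Set.mem_singleton_iff,
    Sym2.eq_iff]
  aesop

lemma deg_addE [Fintype V] {g : SimpleGraph V} {i j : V} (hij : i ≠ j) (h : ¬ g.Adj i j) :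
    deg (addE g i j) i = deg g i + 1 := by
  unfold deg
  rw [Nat.card_coe_set_eq, Nat.card_coe_set_eq, neighborSet_addE hij,
    Set.ncard_insert_of_notMem (by simpa using h)]

lemma deg_delE [Fintype V] {g : SimpleGraph V} {i j : V} (h : g.Adj i j) :
    deg g i = deg (delE g i j) i + 1 := by
  unfold deg
  rw [Nat.card_coe_set_eq, Nat.card_coe_set_eq, neighborSet_delE h.ne,
    Set.ncard_diff_singleton_add_one (by simpa using h)]

end Aux

theorem statement_19 {V : Type*} [Fintype V] (C : V → SimpleGraph V → ℝ) :
    ((∀ i, Axiom1 C i) →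
      (APSN C (⊤ : SimpleGraph V) ∧ ∀ g : SimpleGraph V, APSN C g → g = ⊤)) ∧
    ((∀ i, Axiom1' C i) →
      (APSN C (⊥ : SimpleGraph V) ∧ ∀ g : SimpleGraph V, APSN C g → g = ⊥)) := by
  classical
  constructor
  · intro hA
    -- gain from deleting an edge from ⊤ is positive
    have hgain : ∀ i j : V, i ≠ j → 0 < C i ⊤ - C i (delE ⊤ i j) := by
      intro i j hij
      have hadj : (⊤ : SimpleGraph V).Adj i j := hij
      have := hA i (delE ⊤ i j) j (Ne.symm hij) (not_adj_delE ⊤ i j)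
      rw [addE_delE hadj] at this
      linarith
    -- one-sided deletion blocked
    have hdel : ∀ (c : ℝ) (i j : V), i ≠ j → c ≤ C i ⊤ - C i (delE ⊤ i j) →
        ¬ util C c i (delE ⊤ i j) > util C c i ⊤ := by
      intro c i j hij hc
      have hadj : (⊤ : SimpleGraph V).Adj i j := hij
      have hd := deg_delE (g := (⊤ : SimpleGraph V)) hadj
      simp only [util, not_lt]
      rw [hd]
      push_cast
      ring_nf
      nlinarith [hc]
    constructor
    · -- ⊤ is an APSN
      set S : Finset (V × V) := Finset.univ.offDiag with hS
      by_cases hne : S.Nonempty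
      · set f : V × V → ℝ := fun p => C p.1 ⊤ - C p.1 (delE ⊤ p.1 p.2) with hf
        refine ⟨S.inf' hne f, ?_, ?_⟩
        · rw [Finset.lt_inf'_iff]
          rintro ⟨i, j⟩ hij
          simp only [hS, Finset.mem_offDiag] at hij
          exact hgain i j hij.2.2
        · intro c hc hcε
          constructor
          · intro i j hij hadj
            exact absurd hij (by simpa using hadj)
          · intro i j hadj himp
            have hij : i ≠ j := hadj.ne
            have hmem : (i, j) ∈ S := by simp [hS, hij]
            have hmem' : (j, i) ∈ S := by simp [hS, hij.symm]
            have h1 : c ≤ f (i, j) := le_of_lt (lt_of_lt_of_le hcε (Finset.inf'_le f hmem))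
            have h2 : c ≤ f (j, i) := le_of_lt (lt_of_lt_of_le hcε (Finset.inf'_le f hmem'))
            rcases himp with h | h
            · exact hdel c i j hij h1 h
            · rw [delE_comm] at h
              exact hdel c j i hij.symm h2 h
      · -- no distinct pairs at all
        refine ⟨1, one_pos, fun c hc hcε => ⟨?_, ?_⟩⟩
        · intro i j hij hadj
          exact absurd hij (by simpa using hadj)
        · intro i j hadj
          exact absurd (by simp [hS, hadj.ne] : (i, j) ∈ S) (by simp [Finset.not_nonempty_iff_eq_empty.mp hne])
    · -- uniqueness
      intro g hg
      by_contra hgne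
      have : ∃ i j : V, i ≠ j ∧ ¬ g.Adj i j := by
        by_contra h
        push_neg at h
        apply hgne
        ext a b
        simp only [SimpleGraph.top_adj]
        exact ⟨fun hab => hab.ne, fun hab => h a b hab⟩
      obtain ⟨i, j, hij, hadj⟩ := this
      obtain ⟨ε₀, hε₀, hstab⟩ := hg
      have gi : 0 < C i (addE g i j) - C i g := by
        have := hA i g j (Ne.symm hij) hadj
        linarith
      have gj : 0 < C j (addE g i j) - C j g := by
        have hadj' : ¬ g.Adj j i := fun h => hadj h.symm
        have := hA j g i hij hadj'
        rw [addE_comm] at this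
        linarith
      set M : ℝ := min ε₀ (min (C i (addE g i j) - C i g) (C j (addE g i j) - C j g)) with hM
      have hMpos : 0 < M := lt_min hε₀ (lt_min gi gj)
      have m1 : M ≤ ε₀ := min_le_left _ _
      have m2 : M ≤ C i (addE g i j) - C i g := le_trans (min_le_right _ _) (min_le_left _ _)
      have m3 : M ≤ C j (addE g i j) - C j g := le_trans (min_le_right _ _) (min_le_right _ _)
      set c : ℝ := M / 2 with hc
      have hcpos : 0 < c := by positivity
      have hcε : c < ε₀ := by rw [hc]; linarith
      have hci : c < C i (addE g i j) - C i g := by rw [hc]; linarith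
      have hcj : c < C j (addE g i j) - C j g := by rw [hc]; linarith
      have hdi := deg_addE hij hadj
      have hdj : deg (addE g i j) j = deg g j + 1 := by
        rw [addE_comm]
        exact deg_addE hij.symm (fun h => hadj h.symm)
      have hui : util C c i (addE g i j) > util C c i g := by
        simp only [util, hdi]
        push_cast
        nlinarith
      have huj : util C c j (addE g i j) > util C c j g := by
        simp only [util, hdj]
        push_cast
        nlinarith
      exact (hstab c hcpos hcε).1 i j hij hadj ⟨le_of_lt hui, le_of_lt huj, Or.inl hui⟩
  · intro hA
    constructor
    · -- ⊥ is an APSN at every cost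
      refine ⟨1, one_pos, fun c hc hcε => ⟨?_, ?_⟩⟩
      · intro i j hij hadj himp
        have hlt : C i (addE (⊥ : SimpleGraph V) i j) < C i ⊥ := hA i ⊥ j (Ne.symm hij) hadj
        have hd := deg_addE (g := (⊥ : SimpleGraph V)) hij hadj
        have h1 := himp.1
        simp only [util, hd, ge_iff_le] at h1
        push_cast at h1
        nlinarith
      · intro i j hadj
        simp at hadj
    · intro g hg
      by_contra hgne
      have : ∃ i j : V, g.Adj i j := by
        by_contra h
        push_neg at h
        apply hgne
        ext a b
        simp only [SimpleGraph.bot_adj, iff_false]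
        exact h a b
      obtain ⟨i, j, hadj⟩ := this
      obtain ⟨ε₀, hε₀, hstab⟩ := hg
      have hgain : C i g < C i (delE g i j) := by
        have := hA i (delE g i j) j (Ne.symm hadj.ne) (not_adj_delE g i j)
        rw [addE_delE hadj] at this
        exact this
      set c : ℝ := ε₀ / 2 with hc
      have hcpos : 0 < c := by positivity
      have hcε : c < ε₀ := by linarith
      have hd := deg_delE hadj
      have hui : util C c i (delE g i j) > util C c i g := by
        simp only [util]
        rw [hd]
        push_cast
        nlinarith
      exact (hstab c hcpos hcε).2 i j hadj (Or.inl hui)
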